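/- Let d ≥ 2 and let G be a finite simple graph that admits a crossing-free circular-arc drawing in ℝ^d covered by a family of r circles. Then the bisection width of G satisfies bw(G) ≤ 2r. -/

import Mathlib

open Set

open scoped RealInnerProductSpace

noncomputable section

/-- An `l`-dimensional sphere in `ℝ^d`: the set of points of an `(l+1)`-dimensional affine
subspace `P` of `ℝ^d` at a fixed positive distance `r` from a center `c ∈ P`. -/
def IsSphereDim (d l : ℕ) (S : Set (EuclideanSpace ℝ (Fin d))) : Prop :=
  ∃ (P : AffineSubspace ℝ (EuclideanSpace ℝ (Fin d))) (c : EuclideanSpace ℝ (Fin d)) (r : ℝ),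
    Module.finrank ℝ P.direction = l + 1 ∧ c ∈ P ∧ 0 < r ∧
    S = {x | x ∈ P ∧ dist x c = r}

/-- A circle in `ℝ^d` is a 1-dimensional sphere. -/
def IsCircle (d : ℕ) (S : Set (EuclideanSpace ℝ (Fin d))) : Prop :=
  IsSphereDim d 1 S

/-- An arc in `ℝ^d`: a nonempty compact connected subset of a circle. -/
def IsArc (d : ℕ) (A : Set (EuclideanSpace ℝ (Fin d))) : Prop :=
  ∃ C, IsCircle d C ∧ A ⊆ C ∧ IsCompact A ∧ IsConnected A

/-- A crossing-free circular-arc drawing of a simple graph `G` in `ℝ^d`: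
vertices are mapped injectively to points, every edge `e = uv` is represented by an arc
`arc e` containing the images of `u` and `v`, the arcs of two distinct edges intersect
exactly in the images of the common endpoints of those edges, and the image of a vertex `w`
lies on the arc of an edge `e` only if `w` is an endpoint of `e`. -/
structure CircularArcDrawing (d : ℕ) {V : Type*} (G : SimpleGraph V) where
  pos : V → EuclideanSpace ℝ (Fin d)
  inj : Function.Injective pos
  arc : Sym2 V → Set (EuclideanSpace ℝ (Fin d))
  arc_isArc : ∀ e ∈ G.edgeSet, IsArc d (arc e)
  endpoint_mem : ∀ e ∈ G.edgeSet, ∀ v ∈ e, pos v ∈ arc e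
  crossFree : ∀ e ∈ G.edgeSet, ∀ f ∈ G.edgeSet, e ≠ f →
    arc e ∩ arc f = pos '' {w | w ∈ e ∧ w ∈ f}
  vertex_mem : ∀ e ∈ G.edgeSet, ∀ w, pos w ∈ arc e → w ∈ e

/-- The drawing `D` is covered by the family `𝒞` of sets:
every arc of `D` is contained in some member of `𝒞`. -/
def CircularArcDrawing.CoveredBy {d : ℕ} {V : Type*} {G : SimpleGraph V}
    (D : CircularArcDrawing d G) (𝒞 : Finset (Set (EuclideanSpace ℝ (Fin d)))) : Prop :=
  ∀ e ∈ G.edgeSet, ∃ C ∈ 𝒞, D.arc e ⊆ C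

/-- The number of edges of `G` with one endpoint in `W` and the other endpoint outside `W`. -/
def cutWidth {V : Type*} (G : SimpleGraph V) (W : Finset V) : ℕ :=
  {e ∈ G.edgeSet | ∃ u ∈ W, ∃ v, v ∉ W ∧ e = s(u, v)}.ncard

/-- The bisection width of `G`: the minimum, over all sets `W` of `⌈n/2⌉` vertices
(whose complement then has `⌊n/2⌋` vertices), of the number of edges between
`W` and its complement. -/
def bisectionWidth {V : Type*} [Fintype V] (G : SimpleGraph V) : ℕ :=
  sInf {w | ∃ W : Finset V, W.card = (Fintype.card V + 1) / 2 ∧ w = cutWidth G W}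


private lemma exists_good_functional {d : ℕ} (S : Finset (EuclideanSpace ℝ (Fin d))) :
    ∃ a : EuclideanSpace ℝ (Fin d), ∀ w ∈ S, w ≠ 0 → ⟪a, w⟫ ≠ 0 := by
  classical
  induction S using Finset.induction_on with
  | empty => exact ⟨0, by simp⟩
  | @insert w S hwS ih =>
      obtain ⟨a, ha⟩ := ih
      obtain ⟨ε, hε⟩ := Infinite.exists_notMem_finset
        ((insert w S).image fun v => -⟪a, v⟫ / ⟪w, v⟫)
      refine ⟨a + ε • w, ?_⟩
      intro v hv hv0
      rw [inner_add_left, real_inner_smul_left]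
      by_cases hwv : ⟪w, v⟫ = 0
      · have hvS : v ∈ S := by
          rcases Finset.mem_insert.mp hv with rfl | h
          · exact absurd (inner_self_eq_zero.mp hwv) hv0
          · exact h
        simpa [hwv] using ha v hvS hv0
      · intro h0
        apply hε
        refine Finset.mem_image.mpr ⟨v, hv, ?_⟩
        rw [div_eq_iff hwv]
        linarith

private lemma exists_lower_half {V : Type*} [Fintype V] (g : V → ℝ)
    (hg : Function.Injective g) (k : ℕ) (hk : k ≤ Fintype.card V) :
    ∃ W : Finset V, W.card = k ∧ ∀ u ∈ W, ∀ v, v ∉ W → g u < g v := by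
  classical
  induction k with
  | zero => exact ⟨∅, by simp⟩
  | succ k ih =>
      obtain ⟨W, hWc, hWp⟩ := ih (Nat.le_of_succ_le hk)
      have hne : Wᶜ.Nonempty := by
        rw [← Finset.card_pos, Finset.card_compl, hWc]
        omega
      obtain ⟨v0, hv0, hmin⟩ := Finset.exists_min_image Wᶜ g hne
      have hv0W : v0 ∉ W := Finset.mem_compl.mp hv0
      refine ⟨insert v0 W, ?_, ?_⟩
      · rw [Finset.card_insert_of_notMem hv0W, hWc]
      · intro u hu x hx
        have hxW : x ∉ W := fun h => hx (Finset.mem_insert_of_mem h)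
        have hxv : x ≠ v0 := fun h => hx (h ▸ Finset.mem_insert_self _ _)
        rcases Finset.mem_insert.mp hu with rfl | huW
        · exact lt_of_le_of_ne (hmin x (Finset.mem_compl.mpr hxW))
            (fun h => hxv (hg h).symm)
        · exact hWp u huW x hxW

private lemma exists_threshold {V : Type*} [Fintype V] (g : V → ℝ) (W : Finset V)
    (h : ∀ u ∈ W, ∀ v, v ∉ W → g u < g v) :
    ∃ t : ℝ, (∀ u ∈ W, g u < t) ∧ (∀ v, v ∉ W → t < g v) := by
  classical
  rcases Finset.eq_empty_or_nonempty Wᶜ with hWc | hWc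
  · have hall : ∀ v : V, v ∈ W := by
      intro v
      by_contra hv
      exact Finset.eq_empty_iff_forall_notMem.mp hWc v (Finset.mem_compl.mpr hv)
    rcases W.eq_empty_or_nonempty with rfl | hW
    · exact ⟨0, fun u hu => absurd hu (Finset.notMem_empty u),
        fun v hv => absurd (hall v) hv⟩
    · obtain ⟨u0, hu0, hmax⟩ := Finset.exists_max_image W g hW
      exact ⟨g u0 + 1, fun u hu => lt_of_le_of_lt (hmax u hu) (by linarith),
        fun v hv => absurd (hall v) hv⟩
  · obtain ⟨v0, hv0, hmin⟩ := Finset.exists_min_image Wᶜ g hWc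
    rcases W.eq_empty_or_nonempty with rfl | hW
    · exact ⟨g v0 - 1, fun u hu => absurd hu (Finset.notMem_empty u),
        fun v hv => lt_of_lt_of_le (by linarith) (hmin v (Finset.mem_compl.mpr hv))⟩
    · obtain ⟨u0, hu0, hmax⟩ := Finset.exists_max_image W g hW
      have h0 : g u0 < g v0 := h u0 hu0 v0 (Finset.mem_compl.mp hv0)
      exact ⟨(g u0 + g v0) / 2, fun u hu => lt_of_le_of_lt (hmax u hu) (by linarith),
        fun v hv => lt_of_lt_of_le (by linarith) (hmin v (Finset.mem_compl.mpr hv))⟩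

private lemma circle_level_le_two {d : ℕ} (a : EuclideanSpace ℝ (Fin d))
    {C : Set (EuclideanSpace ℝ (Fin d))} (hC : IsCircle d C) (t : ℝ) :
    (∀ x ∈ C, ⟪a, x⟫ = t) ∨
    ∃ x y : EuclideanSpace ℝ (Fin d), {z | z ∈ C ∧ ⟪a, z⟫ = t} ⊆ {x, y} := by
  classical
  obtain ⟨P, c, ρ, hdim, hcP, hρ, hCeq⟩ := hC
  by_cases hconst : ∀ v ∈ P.direction, ⟪a, v⟫ = 0
  · by_cases hct : ⟪a, c⟫ = t
    · left
      intro x hx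
      rw [hCeq] at hx
      have hxc : x - c ∈ P.direction := by
        simpa [vsub_eq_sub] using AffineSubspace.vsub_mem_direction hx.1 hcP
      have h0 := hconst _ hxc
      rw [inner_sub_right] at h0
      linarith
    · right
      refine ⟨c, c, fun z hz => ?_⟩
      exfalso
      obtain ⟨hzC, hzt⟩ := hz
      rw [hCeq] at hzC
      have hzc : z - c ∈ P.direction := by
        simpa [vsub_eq_sub] using AffineSubspace.vsub_mem_direction hzC.1 hcP
      have h0 := hconst _ hzc
      rw [inner_sub_right] at h0
      exact hct (by linarith)
  · push_neg at hconst
    obtain ⟨v, hvP, hv0⟩ := hconst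
    have hvne : v ≠ 0 := fun h => hv0 (by simp [h])
    right
    by_contra hpair
    push_neg at hpair
    obtain ⟨z₁, hz₁, -⟩ := Set.not_subset.mp (hpair c c)
    obtain ⟨z₂, hz₂, hz₂n⟩ := Set.not_subset.mp (hpair z₁ z₁)
    obtain ⟨z₃, hz₃, hz₃n⟩ := Set.not_subset.mp (hpair z₁ z₂)
    have h21 : z₂ ≠ z₁ := by simpa using hz₂n
    simp only [Set.mem_insert_iff, Set.mem_singleton_iff, not_or] at hz₃n
    obtain ⟨h31, h32⟩ := hz₃n
    -- basic membership facts
    have hmem : ∀ z ∈ ({z₁, z₂, z₃} : Set (EuclideanSpace ℝ (Fin d))),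
        z ∈ P ∧ dist z c = ρ ∧ ⟪a, z⟫ = t := by
      intro z hz
      rcases hz with rfl | rfl | rfl
      · exact ⟨(hCeq ▸ hz₁.1).1, (hCeq ▸ hz₁.1).2, hz₁.2⟩
      · exact ⟨(hCeq ▸ hz₂.1).1, (hCeq ▸ hz₂.1).2, hz₂.2⟩
      · exact ⟨(hCeq ▸ hz₃.1).1, (hCeq ▸ hz₃.1).2, hz₃.2⟩
    set φ : EuclideanSpace ℝ (Fin d) →ₗ[ℝ] ℝ := innerₛₗ ℝ a with hφ
    set L : Submodule ℝ (EuclideanSpace ℝ (Fin d)) := P.direction ⊓ LinearMap.ker φ with hLdef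
    -- finrank L ≤ 1
    have hLle : L ⊔ Submodule.span ℝ {v} ≤ P.direction :=
      sup_le inf_le_left ((Submodule.span_singleton_le_iff_mem v _).mpr hvP)
    have hdisj : L ⊓ Submodule.span ℝ {v} = ⊥ := by
      rw [Submodule.eq_bot_iff]
      rintro x ⟨hxL, hxs⟩
      obtain ⟨s, rfl⟩ := Submodule.mem_span_singleton.mp hxs
      have h0 : φ (s • v) = 0 := hxL.2
      rw [map_smul, smul_eq_mul] at h0
      rcases mul_eq_zero.mp h0 with h | h
      · simp [h]
      · exact absurd h (by simpa [hφ, innerₛₗ_apply_apply] using hv0)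
    have hL1 : Module.finrank ℝ L ≤ 1 := by
      have hsum := Submodule.finrank_sup_add_finrank_inf_eq L (Submodule.span ℝ {v})
      rw [hdisj] at hsum
      have hsp : Module.finrank ℝ (Submodule.span ℝ ({v} : Set (EuclideanSpace ℝ (Fin d)))) = 1 :=
        finrank_span_singleton hvne
      have hle2 : Module.finrank ℝ ↥(L ⊔ Submodule.span ℝ {v}) ≤ 2 := by
        have := Submodule.finrank_mono hLle
        omega
      simp only [finrank_bot, add_zero] at hsum
      omega
    -- collinearity
    have hsub : vectorSpan ℝ ({z₁, z₂, z₃} : Set (EuclideanSpace ℝ (Fin d))) ≤ L := by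
      rw [vectorSpan_def, Submodule.span_le]
      intro w hw
      rw [Set.mem_vsub] at hw
      obtain ⟨p, hp, q, hq, rfl⟩ := hw
      obtain ⟨hpP, -, hpt⟩ := hmem p hp
      obtain ⟨hqP, -, hqt⟩ := hmem q hq
      refine ⟨AffineSubspace.vsub_mem_direction hpP hqP, ?_⟩
      have : φ (p -ᵥ q) = 0 := by
        rw [vsub_eq_sub, map_sub]
        simp [hφ, innerₛₗ_apply_apply, hpt, hqt]
      exact this
    have hcol : Collinear ℝ ({z₁, z₂, z₃} : Set (EuclideanSpace ℝ (Fin d))) := by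
      rw [collinear_iff_rank_le_one]
      refine le_trans (Submodule.rank_mono hsub) ?_
      rw [← Module.finrank_eq_rank]
      exact_mod_cast hL1
    -- three distinct collinear points on a sphere: contradiction
    obtain ⟨-, hd₁, -⟩ := hmem z₁ (by simp)
    obtain ⟨-, hd₂, -⟩ := hmem z₂ (by simp)
    obtain ⟨-, hd₃, -⟩ := hmem z₃ (by simp)
    rcases hcol.wbtw_or_wbtw_or_wbtw with hw | hw | hw
    · have hs : Sbtw ℝ z₁ z₂ z₃ := ⟨hw, h21, fun h => h32 h.symm⟩
      have := hs.dist_lt_max_dist c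
      rw [hd₁, hd₂, hd₃, max_self] at this
      exact lt_irrefl _ this
    · have hs : Sbtw ℝ z₂ z₃ z₁ := ⟨hw, h32, h31⟩
      have := hs.dist_lt_max_dist c
      rw [hd₁, hd₂, hd₃, max_self] at this
      exact lt_irrefl _ this
    · have hs : Sbtw ℝ z₃ z₁ z₂ := ⟨hw, fun h => h31 h.symm, fun h => h21 h.symm⟩
      have := hs.dist_lt_max_dist c
      rw [hd₁, hd₂, hd₃, max_self] at this
      exact lt_irrefl _ this

/-- If a finite simple graph `G` admits a crossing-free circular-arc drawing in `ℝ^d`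
(`d ≥ 2`) covered by a family of `r` circles, then `bw(G) ≤ 2r`. -/
theorem bisectionWidth_le_two_mul_circle_cover {d : ℕ} (hd : 2 ≤ d) {V : Type*} [Fintype V]
    (G : SimpleGraph V) (D : CircularArcDrawing d G)
    (𝒞 : Finset (Set (EuclideanSpace ℝ (Fin d))))
    (hcirc : ∀ C ∈ 𝒞, IsCircle d C) (hcov : D.CoveredBy 𝒞)
    (r : ℕ) (hr : 𝒞.card = r) :
    bisectionWidth G ≤ 2 * r := by
  classical
  obtain ⟨a, ha⟩ := exists_good_functional (d := d)
    ((Finset.univ : Finset (V × V)).image fun p => D.pos p.1 - D.pos p.2)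
  set f : EuclideanSpace ℝ (Fin d) → ℝ := fun x => ⟪a, x⟫ with hfdef
  set g : V → ℝ := fun v => f (D.pos v) with hgdef
  have hginj : Function.Injective g := by
    intro u v huv
    by_contra hne
    have hmem : D.pos u - D.pos v ∈
        (Finset.univ : Finset (V × V)).image (fun p => D.pos p.1 - D.pos p.2) :=
      Finset.mem_image.mpr ⟨(u, v), Finset.mem_univ _, rfl⟩
    have hne0 : D.pos u - D.pos v ≠ 0 := sub_ne_zero.mpr fun h => hne (D.inj h)
    apply ha _ hmem hne0
    rw [inner_sub_right]
    have : ⟪a, D.pos u⟫ = ⟪a, D.pos v⟫ := huv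
    linarith
  have hk : (Fintype.card V + 1) / 2 ≤ Fintype.card V := by omega
  obtain ⟨W, hWcard, hWsep⟩ := exists_lower_half g hginj _ hk
  obtain ⟨t, htW, htWc⟩ := exists_threshold g W hWsep
  have htne : ∀ w : V, f (D.pos w) ≠ t := by
    intro w
    by_cases hw : w ∈ W
    · exact ne_of_lt (htW w hw)
    · exact (ne_of_lt (htWc w hw)).symm
  set cutE : Set (Sym2 V) := {e ∈ G.edgeSet | ∃ u ∈ W, ∃ v, v ∉ W ∧ e = s(u, v)}
    with hcutE
  have hfincut : cutE.Finite := Set.toFinite _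
  set F : Finset (Sym2 V) := hfincut.toFinset with hFdef
  have hFmem : ∀ e ∈ F, e ∈ G.edgeSet ∧ ∃ u ∈ W, ∃ v, v ∉ W ∧ e = s(u, v) := by
    intro e he
    rwa [hFdef, Set.Finite.mem_toFinset] at he
  -- choose a circle and a crossing point for each cut edge
  have hdata : ∀ e : F, ∃ C, C ∈ 𝒞 ∧ D.arc e.1 ⊆ C ∧ ∃ p, p ∈ D.arc e.1 ∧ f p = t := by
    rintro ⟨e, he⟩
    obtain ⟨heE, u, huW, v, hvW, hesuv⟩ := hFmem e he
    obtain ⟨C, hC𝒞, hCsub⟩ := hcov _ heE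
    obtain ⟨C', -, -, -, hconn⟩ := D.arc_isArc _ heE
    have hu : D.pos u ∈ D.arc e :=
      D.endpoint_mem _ heE u (by rw [hesuv]; exact Sym2.mem_mk_left u v)
    have hv : D.pos v ∈ D.arc e :=
      D.endpoint_mem _ heE v (by rw [hesuv]; exact Sym2.mem_mk_right u v)
    have hcont : ContinuousOn f (D.arc e) :=
      (Continuous.inner continuous_const continuous_id).continuousOn
    have hmid : t ∈ Set.Icc (f (D.pos u)) (f (D.pos v)) :=
      ⟨(htW u huW).le, (htWc v hvW).le⟩
    obtain ⟨p, hp, hpt⟩ := hconn.isPreconnected.intermediate_value hu hv hcont hmid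
    exact ⟨C, hC𝒞, hCsub, p, hp, hpt⟩
  choose Cf hCf𝒞 hCfsub pf hpf hpft using hdata
  -- per-circle bound
  have hmain : F.attach.card ≤ 2 * (F.attach.image Cf).card := by
    apply Finset.card_le_mul_card_image
    intro C hC
    obtain ⟨e₀, -, rfl⟩ := Finset.mem_image.mp hC
    rcases circle_level_le_two a (hcirc _ (hCf𝒞 e₀)) t with hcase | ⟨x, y, hxy⟩
    · -- the functional is constant ≡ t on this circle: no cut edge can use it
      have hemp : (F.attach.filter fun e => Cf e = Cf e₀) = ∅ := by
        rw [Finset.eq_empty_iff_forall_notMem]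
        intro e he
        obtain ⟨-, heq⟩ := Finset.mem_filter.mp he
        obtain ⟨heE, u, huW, v, hvW, hesuv⟩ := hFmem e.1 e.2
        have hu : D.pos u ∈ D.arc e.1 :=
          D.endpoint_mem _ heE u (by rw [hesuv]; exact Sym2.mem_mk_left u v)
        have hmm : D.pos u ∈ Cf e₀ := heq ▸ hCfsub e hu
        exact htne u (hcase _ hmm)
      rw [hemp]
      simp
    · -- at most two crossing points on this circle
      have hle : (F.attach.filter fun e => Cf e = Cf e₀).card ≤
          ({x, y} : Finset (EuclideanSpace ℝ (Fin d))).card := by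
        refine Finset.card_le_card_of_injOn (fun e => pf e) ?_ ?_
        · intro e he
          obtain ⟨-, heq⟩ := Finset.mem_filter.mp he
          have hpC : pf e ∈ Cf e₀ := heq ▸ hCfsub e (hpf e)
          have hmm : pf e ∈ ({x, y} : Set (EuclideanSpace ℝ (Fin d))) := hxy ⟨hpC, hpft e⟩
          rcases hmm with h | h
          · simp [h]
          · simp [Set.mem_singleton_iff.mp h]
        · intro e₁ he₁ e₂ he₂ hpe
          by_contra hne
          have hne' : e₁.1 ≠ e₂.1 := fun h => hne (Subtype.ext h)
          obtain ⟨he₁E, -⟩ := hFmem e₁.1 e₁.2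
          obtain ⟨he₂E, -⟩ := hFmem e₂.1 e₂.2
          have hcross := D.crossFree e₁.1 he₁E e₂.1 he₂E hne'
          have hpe' : pf e₁ = pf e₂ := hpe
          have hpin : pf e₁ ∈ D.arc e₁.1 ∩ D.arc e₂.1 := ⟨hpf e₁, hpe' ▸ hpf e₂⟩
          rw [hcross] at hpin
          obtain ⟨w, -, hw⟩ := hpin
          exact htne w (by rw [hw]; exact hpft e₁)
      exact le_trans hle (le_trans (Finset.card_insert_le x {y}) (by simp))
  have himg : F.attach.image Cf ⊆ 𝒞 := by
    intro C hC
    obtain ⟨e, -, rfl⟩ := Finset.mem_image.mp hC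
    exact hCf𝒞 e
  have hFcard : F.card ≤ 2 * r :=
    calc F.card = F.attach.card := (Finset.card_attach).symm
      _ ≤ 2 * (F.attach.image Cf).card := hmain
      _ ≤ 2 * 𝒞.card := Nat.mul_le_mul_left _ (Finset.card_le_card himg)
      _ = 2 * r := by rw [hr]
  have hcutw : cutWidth G W = F.card := by
    rw [cutWidth, Set.ncard_eq_toFinset_card _ hfincut]
  exact le_trans (Nat.sInf_le ⟨W, hWcard, rfl⟩) (by rw [hcutw]; exact hFcard)
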